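/- Let b ∈ ℝ and let α, α₄, β, γ : ℝ × ℝ → ℝ be differentiable functions of (s,t). For z ∈ ℝ define the 2×2 real matrices A_st(z) := −[[α, b],[b z, −α]] and A_ev(z) := z · A_st(z) − [[α₄, β],[γ z, −α₄]] (entrywise functions of (s,t)). Then the zero curvature equation ∂_t A_st(z) − ∂_s A_ev(z) = A_st(z) · A_ev(z) − A_ev(z) · A_st(z) holds at every (s,t) ∈ ℝ² for every z ∈ ℝ if and only if the following four equations hold at every (s,t): ∂_s α = b(γ − β), ∂_t α = ∂_s α₄, ∂_s β = 2αβ − 2bα₄, and ∂_s γ = −2αγ + 2bα₄. -/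

import Mathlib

/-- Partial derivative in the first variable (s). -/
noncomputable def pds (u : ℝ × ℝ → ℝ) : ℝ × ℝ → ℝ :=
  fun p => deriv (fun s => u (s, p.2)) p.1

/-- Partial derivative in the second variable (t). -/
noncomputable def pdt (u : ℝ × ℝ → ℝ) : ℝ × ℝ → ℝ :=
  fun p => deriv (fun t => u (p.1, t)) p.2

/-- Entrywise partial derivative in the first variable of a matrix-valued map. -/
noncomputable def pdsM (A : ℝ × ℝ → Matrix (Fin 2) (Fin 2) ℝ) :
    ℝ × ℝ → Matrix (Fin 2) (Fin 2) ℝ :=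
  fun p => Matrix.of fun i j => deriv (fun s => A (s, p.2) i j) p.1

/-- Entrywise partial derivative in the second variable of a matrix-valued map. -/
noncomputable def pdtM (A : ℝ × ℝ → Matrix (Fin 2) (Fin 2) ℝ) :
    ℝ × ℝ → Matrix (Fin 2) (Fin 2) ℝ :=
  fun p => Matrix.of fun i j => deriv (fun t => A (p.1, t) i j) p.2

/-- The stationary Lax connection matrix `A_st(z) = −[[α, b],[bz, −α]]`. -/
def Ast (b : ℝ) (α : ℝ × ℝ → ℝ) (z : ℝ) (p : ℝ × ℝ) : Matrix (Fin 2) (Fin 2) ℝ :=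
  - !![α p, b; b * z, -(α p)]

/-- The evolutionary Lax connection matrix
`A_ev(z) = z·A_st(z) − [[α₄, β],[γz, −α₄]]`. -/
def Aev (b : ℝ) (α α₄ β γ : ℝ × ℝ → ℝ) (z : ℝ) (p : ℝ × ℝ) :
    Matrix (Fin 2) (Fin 2) ℝ :=
  z • Ast b α z p - !![α₄ p, β p; γ p * z, -(α₄ p)]

/-- Zero curvature representation of the mKdV flows: the equation
`∂ₜ A_st(z) − ∂ₛ A_ev(z) = [A_st(z), A_ev(z)]` holds for all `z` and `(s,t)`
iff the four flow equations for `α, α₄, β, γ` hold. -/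
theorem zero_curvature_iff_flows (b : ℝ) (α α₄ β γ : ℝ × ℝ → ℝ)
    (hα : Differentiable ℝ α) (hα₄ : Differentiable ℝ α₄)
    (hβ : Differentiable ℝ β) (hγ : Differentiable ℝ γ) :
    (∀ z : ℝ, ∀ p : ℝ × ℝ,
        pdtM (fun q => Ast b α z q) p - pdsM (fun q => Aev b α α₄ β γ z q) p
          = Ast b α z p * Aev b α α₄ β γ z p - Aev b α α₄ β γ z p * Ast b α z p)
    ↔ ((∀ p : ℝ × ℝ, pds α p = b * (γ p - β p)) ∧
       (∀ p : ℝ × ℝ, pdt α p = pds α₄ p) ∧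
       (∀ p : ℝ × ℝ, pds β p = 2 * α p * β p - 2 * b * α₄ p) ∧
       (∀ p : ℝ × ℝ, pds γ p = -2 * α p * γ p + 2 * b * α₄ p)) := by
  have Hαt : ∀ p : ℝ × ℝ, HasDerivAt (fun t => α (p.1, t)) (pdt α p) p.2 := fun p =>
    ((hα _).comp _ ((differentiableAt_const _).prodMk differentiableAt_id)).hasDerivAt
  have Hα : ∀ p : ℝ × ℝ, HasDerivAt (fun s => α (s, p.2)) (pds α p) p.1 := fun p =>
    ((hα _).comp _ (differentiableAt_id.prodMk (differentiableAt_const _))).hasDerivAt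
  have Hα₄ : ∀ p : ℝ × ℝ, HasDerivAt (fun s => α₄ (s, p.2)) (pds α₄ p) p.1 := fun p =>
    ((hα₄ _).comp _ (differentiableAt_id.prodMk (differentiableAt_const _))).hasDerivAt
  have Hβ : ∀ p : ℝ × ℝ, HasDerivAt (fun s => β (s, p.2)) (pds β p) p.1 := fun p =>
    ((hβ _).comp _ (differentiableAt_id.prodMk (differentiableAt_const _))).hasDerivAt
  have Hγ : ∀ p : ℝ × ℝ, HasDerivAt (fun s => γ (s, p.2)) (pds γ p) p.1 := fun p =>
    ((hγ _).comp _ (differentiableAt_id.prodMk (differentiableAt_const _))).hasDerivAt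
  have EAst : ∀ (z : ℝ) (p : ℝ × ℝ), pdtM (fun q => Ast b α z q) p =
      !![-(pdt α p), 0; 0, pdt α p] := by
    intro z p
    ext i j
    fin_cases i <;> fin_cases j <;> simp [pdtM, Ast, deriv.fun_neg] <;> exact (Hαt p).deriv
  have EAev : ∀ (z : ℝ) (p : ℝ × ℝ), pdsM (fun q => Aev b α α₄ β γ z q) p =
      !![-(z * pds α p) - pds α₄ p, -(pds β p);
                   -(pds γ p * z), z * pds α p + pds α₄ p] := by
    intro z p
    ext i j
    fin_cases i <;> fin_cases j <;> simp [pdsM, Aev, Ast] <;>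
      first
        | exact (((Hα p).const_mul z).neg.sub (Hα₄ p)).deriv
        | exact ((Hβ p).const_sub _).deriv
        | exact (((Hγ p).mul_const z).const_sub _).deriv
        | exact (((Hα p).const_mul z).add (Hα₄ p)).deriv
        | exact (Hβ p).deriv
        | exact Or.inl (Hγ p).deriv
  constructor
  · intro H
    have h : ∀ (z : ℝ) (p : ℝ × ℝ) (i j : Fin 2),
        (!![-(pdt α p), 0; 0, pdt α p] -
          !![-(z * pds α p) - pds α₄ p, -(pds β p);
                   -(pds γ p * z), z * pds α p + pds α₄ p]) i j
          = (Ast b α z p * Aev b α α₄ β γ z p - Aev b α α₄ β γ z p * Ast b α z p) i j := by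
      intro z p i j
      rw [← EAst z p, ← EAev z p, H z p]
    refine ⟨fun p => ?_, fun p => ?_, fun p => ?_, fun p => ?_⟩
    · have h0 := h 0 p 0 0
      have h1 := h 1 p 0 0
      simp [Ast, Aev, Matrix.mul_apply, Fin.sum_univ_two] at h0 h1
      nlinarith [h0, h1]
    · have h0 := h 0 p 0 0
      simp [Ast, Aev, Matrix.mul_apply, Fin.sum_univ_two] at h0
      linarith
    · have h0 := h 0 p 0 1
      simp [Ast, Aev, Matrix.mul_apply, Fin.sum_univ_two] at h0
      linarith
    · have h0 := h 1 p 1 0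
      simp [Ast, Aev, Matrix.mul_apply, Fin.sum_univ_two] at h0
      nlinarith [h0]
  · rintro ⟨h1, h2, h3, h4⟩ z p
    rw [EAst z p, EAev z p]
    ext i j
    fin_cases i <;> fin_cases j <;>
      simp [Ast, Aev, Matrix.mul_apply, Fin.sum_univ_two] <;>
      first
        | linear_combination z * h1 p - h2 p
        | linear_combination h3 p
        | linear_combination z * h4 p
        | linear_combination h2 p - z * h1 p
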